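/- If ν ≠ δ_1 is a probability measure on ℕ with mean M ≤ 1, then for every a ≥ 0, Σ_{n≥1} ((a+1)/n)·ν^{*n}(n-a-1) = 1, and consequently Σ_{m≥2} (1/(m-1))·ν^{*m}(m-2) = Σ_{a≥0} (1/(a+1))·ν(a). -/

import Mathlib

/-- Convolution of two sequences. -/
def conv (f g : ℕ → ℝ) (n : ℕ) : ℝ := ∑ k ∈ Finset.range (n + 1), f k * g (n - k)

/-- `convPow f m` is the `m`-th convolution power of `f` (with `convPow f 0 = δ_0`). -/
def convPow (f : ℕ → ℝ) : ℕ → ℕ → ℝ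
  | 0, n => if n = 0 then 1 else 0
  | m + 1, n => conv f (convPow f m) n

open Finset PowerSeries

lemma conv_eq_coeff (f g : ℕ → ℝ) (n : ℕ) :
    conv f g n = coeff n (mk f * mk g) := by
  rw [coeff_mul]
  rw [Finset.Nat.sum_antidiagonal_eq_sum_range_succ (f := fun k l => (coeff k (mk f)) * (coeff l (mk g)))]
  simp [conv]

lemma convPow_eq_coeff (f : ℕ → ℝ) (m n : ℕ) :
    convPow f m n = coeff n ((mk f) ^ m) := by
  induction m generalizing n with
  | zero => simp [convPow, coeff_one]
  | succ m ih =>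
    have hmk : PowerSeries.mk (convPow f m) = (mk f) ^ m := by
      ext k; simp [ih k]
    show conv f (convPow f m) n = _
    rw [conv_eq_coeff, hmk, pow_succ, mul_comm ((mk f)^m)]

lemma mk_conv (f g : ℕ → ℝ) : PowerSeries.mk (conv f g) = mk f * mk g := by
  ext n; simp [conv_eq_coeff]

lemma conv_nonneg' {f g : ℕ → ℝ} (hf : ∀ n, 0 ≤ f n) (hg : ∀ n, 0 ≤ g n) (n : ℕ) :
    0 ≤ conv f g n :=
  Finset.sum_nonneg fun k _ => mul_nonneg (hf k) (hg _)

lemma convPow_nonneg {f : ℕ → ℝ} (hf : ∀ n, 0 ≤ f n) (m n : ℕ) : 0 ≤ convPow f m n := by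
  induction m generalizing n with
  | zero => by_cases h : n = 0 <;> simp [convPow, h]
  | succ m ih => exact conv_nonneg' hf (fun k => ih k) n

lemma convPow_one (f : ℕ → ℝ) (n : ℕ) : convPow f 1 n = f n := by
  rw [convPow_eq_coeff, pow_one, coeff_mk]

lemma conv_deriv (f g : ℕ → ℝ) (m : ℕ) :
    (m : ℝ) * conv f g m
      = conv (fun k => (k : ℝ) * f k) g m + conv f (fun k => (k : ℝ) * g k) m := by
  unfold conv
  rw [Finset.mul_sum, ← Finset.sum_add_distrib]
  refine Finset.sum_congr rfl fun k hk => ?_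
  have hk' : k ≤ m := Nat.lt_succ_iff.mp (Finset.mem_range.mp hk)
  have hmk : (m : ℝ) = (k : ℝ) + ((m - k : ℕ) : ℝ) := by
    rw [Nat.cast_sub hk']; ring
  simp only [hmk]; ring

lemma conv_smul (f g : ℕ → ℝ) (c : ℝ) (m : ℕ) :
    conv f (fun k => c * g k) m = c * conv f g m := by
  unfold conv
  rw [Finset.mul_sum]
  exact Finset.sum_congr rfl fun k _ => by ring

lemma conv_left_comm (f g h : ℕ → ℝ) (m : ℕ) :
    conv f (conv g h) m = conv g (conv f h) m := by
  rw [conv_eq_coeff, conv_eq_coeff, mk_conv, mk_conv]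
  ring_nf

lemma derivA (ν : ℕ → ℝ) (n m : ℕ) :
    (m : ℝ) * convPow ν (n + 1) m
      = (n + 1 : ℝ) * conv (fun k => (k : ℝ) * ν k) (convPow ν n) m := by
  induction n generalizing m with
  | zero =>
    have h1 : convPow ν 1 m = ν m := convPow_one ν m
    have h2 : conv (fun k => (k : ℝ) * ν k) (convPow ν 0) m = (m : ℝ) * ν m := by
      have := convPow_one (fun k => (k : ℝ) * ν k) m
      rw [convPow] at this
      exact this
    rw [h1, h2]; ring
  | succ n ih =>
    have hstep : convPow ν (n + 2) m = conv ν (convPow ν (n + 1)) m := rfl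
    rw [hstep, conv_deriv]
    have hD : (fun k : ℕ => (k : ℝ) * convPow ν (n + 1) k)
        = fun k : ℕ => ((n:ℝ) + 1) * conv (fun j => (j : ℝ) * ν j) (convPow ν n) k := by
      funext k; rw [ih k]
    rw [hD, conv_smul, conv_left_comm]
    have : conv ν (convPow ν n) = convPow ν (n+1) := by funext k; rfl
    rw [this]
    push_cast; ring
noncomputable def fp (ν : ℕ → ℝ) (a n : ℕ) : ℝ :=
  if a = 0 then (if n = 0 then 1 else 0)
  else if a ≤ n then ((a : ℝ) / (n : ℝ)) * convPow ν n (n - a) else 0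

lemma fp_zero (ν : ℕ → ℝ) (n : ℕ) : fp ν 0 n = if n = 0 then 1 else 0 := by
  simp [fp]

lemma fp_of_lt {ν : ℕ → ℝ} {a n : ℕ} (h : n < a) : fp ν a n = 0 := by
  have ha : a ≠ 0 := by omega
  simp [fp, ha, Nat.not_le.mpr h]

lemma fp_nonneg {ν : ℕ → ℝ} (hnn : ∀ k, 0 ≤ ν k) (a n : ℕ) : 0 ≤ fp ν a n := by
  unfold fp
  split
  · split <;> norm_num
  · split
    · exact mul_nonneg (div_nonneg (by positivity) (by positivity)) (convPow_nonneg hnn _ _)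
    · exact le_refl 0

lemma fp_rec (ν : ℕ → ℝ) (b n N : ℕ) (hN : n + 1 ≤ N) :
    fp ν (b + 1) (n + 1) = ∑ k ∈ Finset.range N, ν k * fp ν (b + k) n := by
  by_cases hbn : b ≤ n
  · obtain ⟨m, hm⟩ : ∃ m, n = b + m := ⟨n - b, by omega⟩
    subst hm
    by_cases hn0 : b + m = 0
    · -- n = 0, so b = 0, m = 0
      obtain ⟨hb0, hm0⟩ : b = 0 ∧ m = 0 := by omega
      subst hb0; subst hm0
      rw [Finset.sum_eq_single 0]
      · simp [fp, convPow_one]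
      · intro k _ hk
        rw [fp_of_lt (by omega : (0:ℕ) < 0 + k), mul_zero]
      · intro h
        exact absurd (Finset.mem_range.mpr (by omega)) h
    · -- n ≥ 1
      have hnR : ((b + m : ℕ) : ℝ) ≠ 0 := Nat.cast_ne_zero.mpr hn0
      have hterm : ∀ k, ν k * fp ν (b + k) (b + m)
          = if k ≤ m then ν k * ((b + k : ℝ) / (b + m : ℕ)) * convPow ν (b + m) (m - k)
            else 0 := by
        intro k
        by_cases hk : k ≤ m
        · rw [if_pos hk]
          by_cases hbk : b + k = 0
          · obtain ⟨hb0, hk0⟩ : b = 0 ∧ k = 0 := by omega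
            subst hb0; subst hk0
            have hm0 : m ≠ 0 := by omega
            simp [fp, hm0]
          · have hle : b + k ≤ b + m := by omega
            have h2 : (b + m) - (b + k) = m - k := by omega
            rw [fp, if_neg hbk, if_pos hle, h2]
            push_cast
            ring
        · rw [if_neg hk, fp_of_lt (by omega : b + m < b + k), mul_zero]
      have hsum : ∑ k ∈ Finset.range N, ν k * fp ν (b + k) (b + m)
          = ∑ k ∈ Finset.range (m + 1),
              ν k * ((b + k : ℝ) / (b + m : ℕ)) * convPow ν (b + m) (m - k) := by
        rw [Finset.sum_congr rfl (fun k _ => hterm k)]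
        rw [← Finset.sum_subset (Finset.range_subset_range.mpr (by omega : m + 1 ≤ N))]
        · exact Finset.sum_congr rfl fun k hk =>
            if_pos (Nat.lt_succ_iff.mp (Finset.mem_range.mp hk))
        · intro k _ hk
          have : ¬ k ≤ m := fun h => hk (Finset.mem_range.mpr (by omega))
          exact if_neg this
      rw [hsum]
      have hsplit : (((b + m : ℕ) : ℝ))⁻¹ *
            ((b : ℝ) * conv ν (convPow ν (b + m)) m
              + conv (fun k => (k : ℝ) * ν k) (convPow ν (b + m)) m)
          = ∑ k ∈ Finset.range (m + 1),
              ν k * ((b + k : ℝ) / (b + m : ℕ)) * convPow ν (b + m) (m - k) := by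
        unfold conv
        rw [Finset.mul_sum, ← Finset.sum_add_distrib, Finset.mul_sum]
        refine Finset.sum_congr rfl fun k _ => ?_
        field_simp
      rw [← hsplit]
      have h1 : conv ν (convPow ν (b + m)) m = convPow ν (b + m + 1) m := rfl
      have h2 : conv (fun k => (k : ℝ) * ν k) (convPow ν (b + m)) m
          = (m : ℝ) / (((b + m : ℕ) : ℝ) + 1) * convPow ν (b + m + 1) m := by
        have hd := derivA ν (b + m) m
        have hpos : ((b + m : ℕ) : ℝ) + 1 ≠ 0 := by positivity
        field_simp
        push_cast at hd ⊢
        linarith [hd]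
      rw [h1, h2, fp, if_neg (by omega : ¬ b + 1 = 0), if_pos (by omega : b + 1 ≤ b + m + 1)]
      have h3 : b + m + 1 - (b + 1) = m := by omega
      rw [h3]
      have hpos : ((b + m : ℕ) : ℝ) + 1 ≠ 0 := by positivity
      push_cast at hnR ⊢
      field_simp
      ring
  · have hL : fp ν (b + 1) (n + 1) = 0 := fp_of_lt (by omega)
    rw [hL]
    symm
    refine Finset.sum_eq_zero fun k _ => ?_
    rw [fp_of_lt (by omega), mul_zero]

lemma fp_conv (ν : ℕ → ℝ) (n a b : ℕ) :
    fp ν (a + b) n = ∑ m ∈ Finset.range (n + 1), fp ν a m * fp ν b (n - m) := by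
  induction n generalizing a b with
  | zero =>
    rw [Finset.sum_range_one]
    by_cases ha : a = 0
    · subst ha
      simp [fp_zero]
    · rw [fp_of_lt (by omega : (0:ℕ) < a), fp_of_lt (by omega : (0:ℕ) < a + b), zero_mul]
  | succ n ih =>
    match a with
    | 0 =>
      rw [zero_add, Finset.sum_eq_single 0]
      · simp [fp_zero]
      · intro m _ hm
        rw [fp_zero, if_neg hm, zero_mul]
      · intro h
        exact absurd (Finset.mem_range.mpr (by omega)) h
    | c + 1 =>
      have hL : fp ν (c + 1 + b) (n + 1) = ∑ k ∈ Finset.range (n + 2), ν k * fp ν (c + b + k) n := by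
        have := fp_rec ν (c + b) n (n + 2) (by omega)
        rw [show c + b + 1 = c + 1 + b by omega] at this
        exact this
      rw [hL]
      have hIH : ∀ k, fp ν (c + b + k) n
          = ∑ m ∈ Finset.range (n + 1), fp ν (c + k) m * fp ν b (n - m) := by
        intro k
        rw [show c + b + k = (c + k) + b by omega]
        exact ih (c + k) b
      calc ∑ k ∈ Finset.range (n + 2), ν k * fp ν (c + b + k) n
          = ∑ k ∈ Finset.range (n + 2), ∑ m ∈ Finset.range (n + 1),
              ν k * (fp ν (c + k) m * fp ν b (n - m)) := by
            refine Finset.sum_congr rfl fun k _ => ?_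
            rw [hIH k, Finset.mul_sum]
        _ = ∑ m ∈ Finset.range (n + 1), (∑ k ∈ Finset.range (n + 2),
              ν k * fp ν (c + k) m) * fp ν b (n - m) := by
            rw [Finset.sum_comm]
            refine Finset.sum_congr rfl fun m _ => ?_
            rw [Finset.sum_mul]
            exact Finset.sum_congr rfl fun k _ => by ring
        _ = ∑ m ∈ Finset.range (n + 1), fp ν (c + 1) (m + 1) * fp ν b (n - m) := by
            refine Finset.sum_congr rfl fun m hm => ?_
            have hm' : m ≤ n := Nat.lt_succ_iff.mp (Finset.mem_range.mp hm)
            rw [← fp_rec ν c m (n + 2) (by omega)]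
        _ = ∑ m ∈ Finset.range (n + 2), fp ν (c + 1) m * fp ν b (n + 1 - m) := by
            rw [Finset.sum_range_succ' (fun m => fp ν (c + 1) m * fp ν b (n + 1 - m)) (n + 1)]
            rw [fp_of_lt (by omega : (0:ℕ) < c + 1), zero_mul, add_zero]
            exact Finset.sum_congr rfl fun m _ => by rw [Nat.succ_sub_succ]

lemma fp_sum_le {ν : ℕ → ℝ} (hnn : ∀ k, 0 ≤ ν k) (hν : Summable ν)
    (hprob : ∑' k, ν k = 1) : ∀ N a, ∑ n ∈ Finset.range (N + 1), fp ν a n ≤ 1 := by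
  intro N
  induction N with
  | zero =>
    intro a
    rw [Finset.sum_range_one]
    by_cases ha : a = 0
    · subst ha; rw [fp_zero]; norm_num
    · rw [fp_of_lt (by omega : (0:ℕ) < a)]; norm_num
  | succ N ih =>
    intro a
    match a with
    | 0 =>
      rw [Finset.sum_eq_single 0]
      · rw [fp_zero]; norm_num
      · intro m _ hm; rw [fp_zero, if_neg hm]
      · intro h; exact absurd (Finset.mem_range.mpr (by omega)) h
    | c + 1 =>
      rw [Finset.sum_range_succ' (fun n => fp ν (c + 1) n) (N + 1),
        fp_of_lt (by omega : (0:ℕ) < c + 1), add_zero]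
      calc ∑ n ∈ Finset.range (N + 1), fp ν (c + 1) (n + 1)
          = ∑ n ∈ Finset.range (N + 1), ∑ k ∈ Finset.range (N + 2), ν k * fp ν (c + k) n := by
            refine Finset.sum_congr rfl fun n hn => ?_
            exact fp_rec ν c n (N + 2) (by
              have := Finset.mem_range.mp hn; omega)
        _ = ∑ k ∈ Finset.range (N + 2), ν k * ∑ n ∈ Finset.range (N + 1), fp ν (c + k) n := by
            rw [Finset.sum_comm]
            exact Finset.sum_congr rfl fun k _ => (Finset.mul_sum _ _ _).symm
        _ ≤ ∑ k ∈ Finset.range (N + 2), ν k := by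
            refine Finset.sum_le_sum fun k _ => ?_
            calc ν k * ∑ n ∈ Finset.range (N + 1), fp ν (c + k) n
                ≤ ν k * 1 := by
                  refine mul_le_mul_of_nonneg_left (ih (c + k)) (hnn k)
              _ = ν k := mul_one _
        _ ≤ ∑' k, ν k := Summable.sum_le_tsum _ (fun k _ => hnn k) hν
        _ = 1 := hprob

lemma fp_summable {ν : ℕ → ℝ} (hnn : ∀ k, 0 ≤ ν k) (hν : Summable ν)
    (hprob : ∑' k, ν k = 1) (a : ℕ) : Summable (fp ν a) := by
  refine summable_of_sum_range_le (c := 1) (fun n => fp_nonneg hnn a n) fun N => ?_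
  match N with
  | 0 => simp
  | M + 1 => exact fp_sum_le hnn hν hprob M a

lemma fp_tsum_le {ν : ℕ → ℝ} (hnn : ∀ k, 0 ≤ ν k) (hν : Summable ν)
    (hprob : ∑' k, ν k = 1) (a : ℕ) : ∑' n, fp ν a n ≤ 1 := by
  refine Real.tsum_le_of_sum_range_le (fun n => fp_nonneg hnn a n) fun N => ?_
  match N with
  | 0 => simp
  | M + 1 => exact fp_sum_le hnn hν hprob M a

section U
variable {ν : ℕ → ℝ} (hnn : ∀ k, 0 ≤ ν k) (hν : Summable ν) (hprob : ∑' k, ν k = 1)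

noncomputable def Uu (ν : ℕ → ℝ) (a : ℕ) : ℝ := ∑' n, fp ν a n

include hnn hν hprob

lemma Uu_nonneg (a : ℕ) : 0 ≤ Uu ν a :=
  tsum_nonneg fun n => fp_nonneg hnn a n

lemma Uu_le_one (a : ℕ) : Uu ν a ≤ 1 := fp_tsum_le hnn hν hprob a

lemma Uu_zero : Uu ν 0 = 1 := by
  unfold Uu
  rw [tsum_congr (fun n => fp_zero ν n), tsum_ite_eq 0 (fun _ => (1:ℝ))]

lemma Uu_add (a b : ℕ) : Uu ν (a + b) = Uu ν a * Uu ν b := by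
  have hfa : Summable fun n => ‖fp ν a n‖ :=
    (fp_summable hnn hν hprob a).congr fun n => (abs_of_nonneg (fp_nonneg hnn a n)).symm
  have hfb : Summable fun n => ‖fp ν b n‖ :=
    (fp_summable hnn hν hprob b).congr fun n => (abs_of_nonneg (fp_nonneg hnn b n)).symm
  unfold Uu
  rw [tsum_mul_tsum_eq_tsum_sum_range_of_summable_norm hfa hfb]
  exact tsum_congr fun n => fp_conv ν n a b

lemma Uu_pow (a : ℕ) : Uu ν a = (Uu ν 1) ^ a := by
  induction a with
  | zero => rw [pow_zero]; exact Uu_zero hnn hν hprob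
  | succ a ih => rw [Uu_add hnn hν hprob a 1, ih, pow_succ]

lemma fp_one_summable_k (k n : ℕ) : fp ν k n ≤ 1 := by
  calc fp ν k n ≤ ∑ m ∈ Finset.range (n + 1), fp ν k m :=
        Finset.single_le_sum (fun m _ => fp_nonneg hnn k m)
          (Finset.mem_range.mpr (by omega))
    _ ≤ 1 := fp_sum_le hnn hν hprob n k

lemma Uu_fixed : Uu ν 1 = ∑' k, ν k * Uu ν k := by
  have hrec : ∀ n, fp ν 1 (n + 1) = ∑' k, ν k * fp ν k n := by
    intro n
    rw [tsum_eq_sum (s := Finset.range (n + 1)) (fun k hk => ?_)]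
    · have := fp_rec ν 0 n (n + 1) le_rfl
      simpa using this
    · have hk' : n < k := by
        by_contra h
        exact hk (Finset.mem_range.mpr (by omega))
      rw [fp_of_lt (by omega : n < k), mul_zero]
  have hF : Summable (Function.uncurry fun k n => ν k * fp ν k n) := by
    refine summable_of_sum_le (c := 1) (fun p => mul_nonneg (hnn _) (fp_nonneg hnn _ _))
      fun u => ?_
    set A := (u.sup Prod.fst) + 1
    set B := (u.sup Prod.snd) + 1
    have hsub : u ⊆ Finset.range A ×ˢ Finset.range B := by
      intro p hp
      refine Finset.mem_product.mpr ⟨Finset.mem_range.mpr ?_, Finset.mem_range.mpr ?_⟩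
      · exact Nat.lt_succ_of_le (Finset.le_sup (f := Prod.fst) hp)
      · exact Nat.lt_succ_of_le (Finset.le_sup (f := Prod.snd) hp)
    calc ∑ p ∈ u, ν p.1 * fp ν p.1 p.2
        ≤ ∑ p ∈ Finset.range A ×ˢ Finset.range B, ν p.1 * fp ν p.1 p.2 :=
          Finset.sum_le_sum_of_subset_of_nonneg hsub
            (fun p _ _ => mul_nonneg (hnn _) (fp_nonneg hnn _ _))
      _ = ∑ k ∈ Finset.range A, ∑ n ∈ Finset.range B, ν k * fp ν k n := by
          rw [Finset.sum_product]
      _ ≤ ∑ k ∈ Finset.range A, ν k := by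
          refine Finset.sum_le_sum fun k _ => ?_
          rw [← Finset.mul_sum]
          calc ν k * ∑ n ∈ Finset.range B, fp ν k n
              ≤ ν k * 1 := by
                refine mul_le_mul_of_nonneg_left ?_ (hnn k)
                exact fp_sum_le hnn hν hprob (u.sup Prod.snd) k
            _ = ν k := mul_one _
      _ ≤ ∑' k, ν k := Summable.sum_le_tsum _ (fun k _ => hnn k) hν
      _ = 1 := hprob
  have hswap : ∑' n, ∑' k, ν k * fp ν k n = ∑' k, ∑' n, ν k * fp ν k n := by
    refine Summable.tsum_comm' hF ?_ ?_
    · intro k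
      exact (fp_summable hnn hν hprob k).mul_left (ν k)
    · intro n
      refine Summable.of_nonneg_of_le (fun k => mul_nonneg (hnn _) (fp_nonneg hnn _ _))
        (fun k => ?_) hν
      calc ν k * fp ν k n ≤ ν k * 1 :=
            mul_le_mul_of_nonneg_left (fp_one_summable_k hnn hν hprob k n) (hnn k)
        _ = ν k := mul_one _
  calc Uu ν 1 = fp ν 1 0 + ∑' n, fp ν 1 (n + 1) :=
        Summable.tsum_eq_zero_add (fp_summable hnn hν hprob 1)
    _ = ∑' n, fp ν 1 (n + 1) := by
        rw [fp_of_lt (by omega : (0:ℕ) < 1), zero_add]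
    _ = ∑' n, ∑' k, ν k * fp ν k n := tsum_congr hrec
    _ = ∑' k, ∑' n, ν k * fp ν k n := hswap
    _ = ∑' k, ν k * Uu ν k := tsum_congr fun k => (tsum_mul_left)

end U

lemma fixed_point_eq_one {ν : ℕ → ℝ} (hnn : ∀ k, 0 ≤ ν k) (hν : Summable ν)
    (hprob : ∑' k, ν k = 1)
    (hne : ν ≠ fun a => if a = 1 then 1 else 0)
    (hsummean : Summable fun a : ℕ => (a : ℝ) * ν a)
    (hM : ∑' a : ℕ, (a : ℝ) * ν a ≤ 1)
    {s : ℝ} (hs0 : 0 ≤ s) (hs1 : s ≤ 1)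
    (hfix : s = ∑' k, ν k * s ^ k) : s = 1 := by
  by_contra hs
  have hlt : s < 1 := lt_of_le_of_ne hs1 hs
  by_cases hbig : ∃ k0, 2 ≤ k0 ∧ 0 < ν k0
  · obtain ⟨k0, hk02, hνk0⟩ := hbig
    have hpow : ∀ k : ℕ, 1 + (k : ℝ) * (s - 1) ≤ s ^ k := by
      intro k
      have h := one_add_mul_le_pow (by linarith : (-2:ℝ) ≤ s - 1) k
      have h1 : (1:ℝ) + (s - 1) = s := by ring
      rwa [h1] at h
    have hpowle : ∀ k : ℕ, s ^ k ≤ 1 := fun k => pow_le_one₀ hs0 hs1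
    have hsum1 : Summable fun k => ν k * s ^ k := by
      refine Summable.of_nonneg_of_le
        (fun k => mul_nonneg (hnn k) (pow_nonneg hs0 k)) (fun k => ?_) hν
      calc ν k * s ^ k ≤ ν k * 1 := mul_le_mul_of_nonneg_left (hpowle k) (hnn k)
        _ = ν k := mul_one _
    have hsum2 : Summable fun k => ν k * s := hν.mul_right s
    have hg : Summable fun k => ν k * (s ^ k - s) :=
      (hsum1.sub hsum2).congr fun k => by ring
    have hh : Summable fun k => ν k * (1 + (k:ℝ) * (s - 1) - s) :=
      ((hν.mul_right (1 - s)).add (hsummean.mul_right (s - 1))).congr fun k => by ring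
    have htg : ∑' k, ν k * (s ^ k - s) = 0 := by
      rw [tsum_congr (fun k => show ν k * (s^k - s) = ν k * s^k - ν k * s by ring),
        Summable.tsum_sub hsum1 hsum2, ← hfix, tsum_mul_right, hprob]
      ring
    have hth : ∑' k, ν k * (1 + (k:ℝ) * (s - 1) - s)
        = (1 - s) * (1 - ∑' a : ℕ, (a : ℝ) * ν a) := by
      rw [tsum_congr (fun k => show ν k * (1 + (k:ℝ)*(s-1) - s)
        = ν k * (1 - s) + ((k:ℝ) * ν k) * (s - 1) by ring),
        Summable.tsum_add (hν.mul_right (1 - s)) (hsummean.mul_right (s - 1)),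
        tsum_mul_right, tsum_mul_right, hprob]
      ring
    have hstrict : 1 + (k0 : ℝ) * (s - 1) < s ^ k0 := by
      have hgeom : (∑ i ∈ Finset.range k0, s ^ i) * (s - 1) = s ^ k0 - 1 :=
        geom_sum_mul s k0
      have hsumlt : ∑ i ∈ Finset.range k0, s ^ i < (k0 : ℝ) := by
        calc ∑ i ∈ Finset.range k0, s ^ i
            < ∑ i ∈ Finset.range k0, (1:ℝ) := by
              refine Finset.sum_lt_sum (fun i _ => hpowle i) ⟨1, Finset.mem_range.mpr (by omega), ?_⟩
              simpa using hlt
          _ = (k0 : ℝ) := by simp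
      have := mul_lt_mul_of_neg_right hsumlt (by linarith : s - 1 < 0)
      rw [hgeom] at this
      linarith
    have hlt2 : ∑' k, ν k * (1 + (k:ℝ) * (s - 1) - s) < ∑' k, ν k * (s ^ k - s) := by
      refine Summable.tsum_lt_tsum (i := k0) (fun k => ?_) ?_ hh hg
      · exact mul_le_mul_of_nonneg_left (by linarith [hpow k]) (hnn k)
      · exact mul_lt_mul_of_pos_left (by linarith) hνk0
    rw [htg, hth] at hlt2
    nlinarith
  · push_neg at hbig
    have hzero : ∀ k, 2 ≤ k → ν k = 0 := fun k hk => le_antisymm (hbig k hk) (hnn k)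
    have h01 : ν 0 + ν 1 = 1 := by
      rw [← hprob, tsum_eq_sum (s := Finset.range 2)
        (fun k hk => hzero k (by simp only [Finset.mem_range] at hk; omega))]
      simp [Finset.sum_range_succ]
    have hsx : ∑' k, ν k * s ^ k = ν 0 + ν 1 * s := by
      rw [tsum_eq_sum (s := Finset.range 2) (fun k hk => by
        rw [hzero k (by simp only [Finset.mem_range] at hk; omega), zero_mul])]
      simp [Finset.sum_range_succ]
    rw [hsx] at hfix
    have hν1 : ν 1 = 1 := by
      by_contra hn1
      have key : (1 - ν 1) * (s - 1) = 0 := by linear_combination hfix + h01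
      rcases mul_eq_zero.mp key with h | h
      · exact hn1 (by linarith)
      · exact hs (by linarith)
    refine hne (funext fun k => ?_)
    match k with
    | 0 => simp only [ite_false, Nat.zero_ne_one, if_false]; linarith
    | 1 => simpa using hν1
    | k + 2 =>
      rw [hzero (k + 2) (by omega)]
      simp

section Final
variable {ν : ℕ → ℝ} (hnn : ∀ a, 0 ≤ ν a) (hprob : ∑' a : ℕ, ν a = 1)
  (hne : ν ≠ fun a => if a = 1 then 1 else 0)
  (hsummean : Summable fun a : ℕ => (a : ℝ) * ν a)
  (hM : ∑' a : ℕ, (a : ℝ) * ν a ≤ 1)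

lemma hsummable_nu : (∀ a, 0 ≤ ν a) → (∑' a : ℕ, ν a = 1) → Summable ν := by
  intro h1 h2
  by_contra h
  rw [tsum_eq_zero_of_not_summable h] at h2
  norm_num at h2

include hnn hprob hne hsummean hM

lemma key_one (a : ℕ) : ∑' n, fp ν (a + 1) (n + 1) = 1 := by
  have hν : Summable ν := hsummable_nu hnn hprob
  have hs1 : Uu ν 1 = 1 := by
    refine fixed_point_eq_one hnn hν hprob hne hsummean hM
      (Uu_nonneg hnn hν hprob 1) (Uu_le_one hnn hν hprob 1) ?_
    exact (Uu_fixed hnn hν hprob).trans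
      (tsum_congr fun k => by rw [Uu_pow hnn hν hprob k])
  have hU : Uu ν (a + 1) = 1 := by
    rw [Uu_pow hnn hν hprob (a + 1), hs1, one_pow]
  have := Summable.tsum_eq_zero_add (f := fp ν (a + 1)) (fp_summable hnn hν hprob (a + 1))
  rw [fp_of_lt (by omega : (0:ℕ) < a + 1), zero_add] at this
  rw [← this]
  exact hU

lemma part_one (a : ℕ) :
    ∑' n : ℕ, (((a : ℝ) + 1) / ((n : ℝ) + 1)) *
      (if a ≤ n then convPow ν (n + 1) (n - a) else 0) = 1 := by
  have hterm : ∀ n : ℕ, (((a : ℝ) + 1) / ((n : ℝ) + 1)) *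
      (if a ≤ n then convPow ν (n + 1) (n - a) else 0) = fp ν (a + 1) (n + 1) := by
    intro n
    by_cases h : a ≤ n
    · rw [if_pos h, fp, if_neg (by omega : ¬ a + 1 = 0), if_pos (by omega : a + 1 ≤ n + 1)]
      have : n + 1 - (a + 1) = n - a := by omega
      rw [this]
      push_cast
      ring
    · rw [if_neg h, fp, if_neg (by omega : ¬ a + 1 = 0),
        if_neg (by omega : ¬ a + 1 ≤ n + 1), mul_zero]
  rw [tsum_congr hterm]
  exact key_one hnn hprob hne hsummean hM a

lemma part_two :
    ∑' m : ℕ, ((m : ℝ) + 1)⁻¹ * convPow ν (m + 2) m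
      = ∑' a : ℕ, ((a : ℝ) + 1)⁻¹ * ν a := by
  have hν : Summable ν := hsummable_nu hnn hprob
  set G : ℕ → ℕ → ℝ := fun a m => ν a * ((a : ℝ) + 1)⁻¹ * fp ν (a + 1) (m + 1) with hG
  have hGnn : ∀ a m, 0 ≤ G a m := fun a m =>
    mul_nonneg (mul_nonneg (hnn a) (by positivity)) (fp_nonneg hnn _ _)
  have hshift_sum_le : ∀ (a B : ℕ), ∑ m ∈ Finset.range B, fp ν (a + 1) (m + 1) ≤ 1 := by
    intro a B
    have h1 : ∑ n ∈ Finset.range (B + 1), fp ν (a + 1) n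
        = ∑ m ∈ Finset.range B, fp ν (a + 1) (m + 1) + fp ν (a + 1) 0 :=
      Finset.sum_range_succ' _ B
    have h2 := fp_sum_le hnn hν hprob B (a + 1)
    rw [h1, fp_of_lt (by omega : (0:ℕ) < a + 1), add_zero] at h2
    exact h2
  have hGle : ∀ a m, G a m ≤ ν a := by
    intro a m
    have h1 : ((a : ℝ) + 1)⁻¹ ≤ 1 := by
      rw [inv_le_one_iff₀]; right; linarith [Nat.cast_nonneg (α := ℝ) a]
    have h2 : fp ν (a + 1) (m + 1) ≤ 1 := fp_one_summable_k hnn hν hprob (a + 1) (m + 1)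
    calc G a m ≤ ν a * 1 * 1 := by
          refine mul_le_mul (mul_le_mul le_rfl h1 (by positivity) (hnn a)) h2
            (fp_nonneg hnn _ _) (mul_nonneg (hnn a) zero_le_one)
      _ = ν a := by ring
  -- step 1: rewrite each term of the LHS
  have hterm : ∀ m : ℕ, ((m : ℝ) + 1)⁻¹ * convPow ν (m + 2) m = ∑' a, G a m := by
    intro m
    rw [tsum_eq_sum (s := Finset.range (m + 1)) (fun a ha => by
      simp only [hG]
      have : m + 1 < a + 1 := by
        simp only [Finset.mem_range] at ha; omega
      rw [fp_of_lt this, mul_zero])]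
    have hconv : convPow ν (m + 2) m
        = ∑ a ∈ Finset.range (m + 1), ν a * convPow ν (m + 1) (m - a) := rfl
    rw [hconv, Finset.mul_sum]
    refine Finset.sum_congr rfl fun a ha => ?_
    have ham : a ≤ m := by simp only [Finset.mem_range] at ha; omega
    simp only [hG]
    rw [fp, if_neg (by omega : ¬ a + 1 = 0), if_pos (by omega : a + 1 ≤ m + 1)]
    have : m + 1 - (a + 1) = m - a := by omega
    rw [this]
    have ha1 : ((a : ℝ) + 1) ≠ 0 := by positivity
    push_cast
    field_simp
  rw [tsum_congr hterm]
  -- step 2: Fubini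
  have hF : Summable (Function.uncurry G) := by
    refine summable_of_sum_le (c := 1) (fun p => hGnn p.1 p.2) fun u => ?_
    set A := (u.sup Prod.fst) + 1
    set B := (u.sup Prod.snd) + 1
    have hsub : u ⊆ Finset.range A ×ˢ Finset.range B := by
      intro p hp
      refine Finset.mem_product.mpr ⟨Finset.mem_range.mpr ?_, Finset.mem_range.mpr ?_⟩
      · exact Nat.lt_succ_of_le (Finset.le_sup (f := Prod.fst) hp)
      · exact Nat.lt_succ_of_le (Finset.le_sup (f := Prod.snd) hp)
    calc ∑ p ∈ u, G p.1 p.2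
        ≤ ∑ p ∈ Finset.range A ×ˢ Finset.range B, G p.1 p.2 :=
          Finset.sum_le_sum_of_subset_of_nonneg hsub (fun p _ _ => hGnn p.1 p.2)
      _ = ∑ a ∈ Finset.range A, ∑ m ∈ Finset.range B, G a m := by
          rw [Finset.sum_product]
      _ ≤ ∑ a ∈ Finset.range A, ν a := by
          refine Finset.sum_le_sum fun a _ => ?_
          simp only [hG]
          rw [← Finset.mul_sum]
          have h1 : ((a : ℝ) + 1)⁻¹ ≤ 1 := by
            rw [inv_le_one_iff₀]; right; linarith [Nat.cast_nonneg (α := ℝ) a]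
          calc ν a * ((a : ℝ) + 1)⁻¹ * ∑ m ∈ Finset.range B, fp ν (a + 1) (m + 1)
              ≤ ν a * 1 * 1 := by
                refine mul_le_mul (mul_le_mul le_rfl h1 (by positivity) (hnn a))
                  (hshift_sum_le a B)
                  (Finset.sum_nonneg fun m _ => fp_nonneg hnn _ _)
                  (mul_nonneg (hnn a) zero_le_one)
            _ = ν a := by ring
      _ ≤ ∑' a, ν a := Summable.sum_le_tsum _ (fun a _ => hnn a) hν
      _ = 1 := hprob
  have hsummG : ∀ a, Summable (G a) := by
    intro a
    refine Summable.mul_left _ ?_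
    exact (summable_nat_add_iff 1).mpr (fp_summable hnn hν hprob (a + 1))
  have hsummG2 : ∀ m, Summable fun a => G a m := by
    intro m
    exact Summable.of_nonneg_of_le (fun a => hGnn a m) (fun a => hGle a m) hν
  rw [Summable.tsum_comm' hF hsummG hsummG2]
  refine tsum_congr fun a => ?_
  simp only [hG]
  rw [tsum_mul_left, key_one hnn hprob hne hsummean hM a, mul_one, mul_comm]

end Final

theorem stmt_18 (ν : ℕ → ℝ) (hnn : ∀ a, 0 ≤ ν a) (hprob : ∑' a : ℕ, ν a = 1)
    (hne : ν ≠ fun a => if a = 1 then 1 else 0)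
    (hsummean : Summable fun a : ℕ => (a : ℝ) * ν a)
    (hM : ∑' a : ℕ, (a : ℝ) * ν a ≤ 1) :
    (∀ a : ℕ, ∑' n : ℕ,
        (((a : ℝ) + 1) / ((n : ℝ) + 1)) *
          (if a ≤ n then convPow ν (n + 1) (n - a) else 0) = 1) ∧
    ∑' m : ℕ, ((m : ℝ) + 1)⁻¹ * convPow ν (m + 2) m =
      ∑' a : ℕ, ((a : ℝ) + 1)⁻¹ * ν a :=
  ⟨fun a => part_one hnn hprob hne hsummean hM a,
    part_two hnn hprob hne hsummean hM⟩
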